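/- If an unbounded modulus function f is compatible, then f is θ-compatible for every lacunary sequence θ. -/
import Mathlib


open Filter Metric Set

/-- `f : ℝ → ℝ` is an (unbounded) modulus function (considered on `[0,∞)`):
`f x = 0 ↔ x = 0`, subadditive, increasing, continuous from the right at `0`,
and unbounded. -/
def IsModulus (f : ℝ → ℝ) : Prop :=
  (∀ x ∈ Set.Ici (0:ℝ), 0 ≤ f x) ∧
  (∀ x ∈ Set.Ici (0:ℝ), (f x = 0 ↔ x = 0)) ∧
  (∀ x ∈ Set.Ici (0:ℝ), ∀ y ∈ Set.Ici (0:ℝ), f (x + y) ≤ f x + f y) ∧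
  MonotoneOn f (Set.Ici (0:ℝ)) ∧
  ContinuousWithinAt f (Set.Ici (0:ℝ)) 0 ∧
  (∀ M : ℝ, ∃ x ∈ Set.Ici (0:ℝ), M < f x)

/-- `φ(ε) = limsup_n f(nε)/f(n)`. -/
noncomputable def modPhi (f : ℝ → ℝ) (ε : ℝ) : ℝ :=
  Filter.limsup (fun n : ℕ => f ((n : ℝ) * ε) / f (n : ℝ)) Filter.atTop

/-- A modulus function is compatible if `φ(ε) → 0` as `ε → 0⁺`. -/
def Compatible (f : ℝ → ℝ) : Prop :=
  Filter.Tendsto (modPhi f) (nhdsWithin 0 (Set.Ioi 0)) (nhds 0)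

/-- Wijsman statistical convergence of a sequence of subsets of a metric space. -/
def WijsmanStatConv {X : Type*} [MetricSpace X] (A : ℕ → Set X) (B : Set X) : Prop :=
  ∀ x : X, ∀ ε > (0:ℝ),
    Filter.Tendsto (fun n : ℕ =>
      (((Finset.range n).filter
        (fun j => ε < |infDist x (A j) - infDist x B|)).card : ℝ) / (n : ℝ))
      Filter.atTop (nhds 0)

/-- Wijsman `f`-statistical convergence of a sequence of subsets of a metric space. -/
def WijsmanFStatConv {X : Type*} [MetricSpace X] (f : ℝ → ℝ) (A : ℕ → Set X)
    (B : Set X) : Prop :=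
  ∀ x : X, ∀ ε > (0:ℝ),
    Filter.Tendsto (fun n : ℕ =>
      f ((((Finset.range n).filter
        (fun j => ε < |infDist x (A j) - infDist x B|)).card : ℝ)) / f (n : ℝ))
      Filter.atTop (nhds 0)

/-- A real sequence is `f`-strong Cesàro convergent to `L`. -/
def FStrongCesaro (f : ℝ → ℝ) (x : ℕ → ℝ) (L : ℝ) : Prop :=
  Filter.Tendsto (fun n : ℕ =>
    f (∑ j ∈ Finset.range n, |x j - L|) / f (n : ℝ)) Filter.atTop (nhds 0)

/-- Wijsman `f`-strong Cesàro convergence. -/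
def WijsmanFStrongCesaro {X : Type*} [MetricSpace X] (f : ℝ → ℝ) (A : ℕ → Set X)
    (B : Set X) : Prop :=
  ∀ x : X, FStrongCesaro f (fun j => infDist x (A j)) (infDist x B)

/-- Wijsman strong Cesàro convergence (the case `f = id`). -/
def WijsmanStrongCesaro {X : Type*} [MetricSpace X] (A : ℕ → Set X) (B : Set X) : Prop :=
  ∀ x : X,
    Filter.Tendsto (fun n : ℕ =>
      (∑ j ∈ Finset.range n, |infDist x (A j) - infDist x B|) / (n : ℝ))
      Filter.atTop (nhds 0)

/-- A real sequence is uniformly integrable. -/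
def UnifIntegrable (x : ℕ → ℝ) : Prop :=
  Filter.Tendsto (fun c : ℝ =>
    ⨆ n : ℕ, (∑ j ∈ Finset.range n, if c ≤ |x j| then |x j| else 0) / (n : ℝ))
    Filter.atTop (nhds 0)

/-- Wijsman uniform integrability. -/
def WijsmanUnifIntegrable {X : Type*} [MetricSpace X] (A : ℕ → Set X) : Prop :=
  ∀ x : X, UnifIntegrable (fun j => infDist x (A j))

/-- A lacunary sequence: strictly increasing, starting at `0`,
with gaps `h_r = k_{r+1} - k_r → ∞`. -/
def IsLacunary (k : ℕ → ℕ) : Prop :=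
  k 0 = 0 ∧ StrictMono k ∧
    Filter.Tendsto (fun r : ℕ => k (r + 1) - k r) Filter.atTop Filter.atTop

/-- The gaps `h_r` of a lacunary sequence. -/
def lacH (k : ℕ → ℕ) (r : ℕ) : ℕ := k (r + 1) - k r

/-- The blocks `I_r = (k_r, k_{r+1}]` of a lacunary sequence. -/
def lacI (k : ℕ → ℕ) (r : ℕ) : Finset ℕ := Finset.Ioc (k r) (k (r + 1))

/-- `φ_θ(ε) = limsup_t f(h_t ε)/f(h_t)`. -/
noncomputable def modPhiTheta (f : ℝ → ℝ) (k : ℕ → ℕ) (ε : ℝ) : ℝ :=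
  Filter.limsup (fun t : ℕ => f ((lacH k t : ℝ) * ε) / f ((lacH k t : ℝ))) Filter.atTop

/-- `f` is `θ`-compatible if `φ_θ(ε) → 0` as `ε → 0⁺`. -/
def ThetaCompatible (f : ℝ → ℝ) (k : ℕ → ℕ) : Prop :=
  Filter.Tendsto (modPhiTheta f k) (nhdsWithin 0 (Set.Ioi 0)) (nhds 0)

/-- Wijsman `θ`-lacunary statistical convergence. -/
def WijsmanLacStatConv {X : Type*} [MetricSpace X] (k : ℕ → ℕ) (A : ℕ → Set X)
    (B : Set X) : Prop :=
  ∀ x : X, ∀ ε > (0:ℝ),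
    Filter.Tendsto (fun r : ℕ =>
      (((lacI k r).filter
        (fun j => ε < |infDist x (A j) - infDist x B|)).card : ℝ) / (lacH k r : ℝ))
      Filter.atTop (nhds 0)

/-- Wijsman `θ`-lacunary `f`-statistical convergence. -/
def WijsmanLacFStatConv {X : Type*} [MetricSpace X] (f : ℝ → ℝ) (k : ℕ → ℕ)
    (A : ℕ → Set X) (B : Set X) : Prop :=
  ∀ x : X, ∀ ε > (0:ℝ),
    Filter.Tendsto (fun r : ℕ =>
      f ((((lacI k r).filter
        (fun j => ε < |infDist x (A j) - infDist x B|)).card : ℝ)) / f ((lacH k r : ℝ)))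
      Filter.atTop (nhds 0)

/-- Wijsman `θ`-lacunary `f`-strong Cesàro convergence. -/
def WijsmanLacFStrongCesaro {X : Type*} [MetricSpace X] (f : ℝ → ℝ) (k : ℕ → ℕ)
    (A : ℕ → Set X) (B : Set X) : Prop :=
  ∀ x : X,
    Filter.Tendsto (fun r : ℕ =>
      f (∑ j ∈ lacI k r, |infDist x (A j) - infDist x B|) / f ((lacH k r : ℝ)))
      Filter.atTop (nhds 0)

/-- Wijsman `θ`-lacunary strong Cesàro convergence (the case `f = id`). -/
def WijsmanLacStrongCesaro {X : Type*} [MetricSpace X] (k : ℕ → ℕ)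
    (A : ℕ → Set X) (B : Set X) : Prop :=
  ∀ x : X,
    Filter.Tendsto (fun r : ℕ =>
      (∑ j ∈ lacI k r, |infDist x (A j) - infDist x B|) / (lacH k r : ℝ))
      Filter.atTop (nhds 0)

/-- A real sequence is `θ`-lacunary uniformly integrable. -/
def LacUnifIntegrable (k : ℕ → ℕ) (x : ℕ → ℝ) : Prop :=
  Filter.Tendsto (fun M : ℝ =>
    ⨆ t : ℕ, (∑ j ∈ lacI k t, if M ≤ |x j| then |x j| else 0) / (lacH k t : ℝ))
    Filter.atTop (nhds 0)

/-- Wijsman `θ`-lacunary uniform integrability. -/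
def WijsmanLacUnifIntegrable {X : Type*} [MetricSpace X] (k : ℕ → ℕ)
    (A : ℕ → Set X) : Prop :=
  ∀ x : X, LacUnifIntegrable k (fun j => infDist x (A j))


theorem thetaCompatible_of_compatible
    (f : ℝ → ℝ) (hf : IsModulus f) (hfc : Compatible f)
    (k : ℕ → ℕ) (hk : IsLacunary k) : ThetaCompatible f k := by
  obtain ⟨hpos, hzero, hsub, hmono, hcont, hunb⟩ := hf
  have f1pos : 0 < f 1 := by
    rcases lt_or_eq_of_le (hpos 1 (by norm_num)) with h | h
    · exact h
    · exact absurd ((hzero 1 (by norm_num)).1 h.symm) one_ne_zero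
  have fnpos : ∀ n : ℕ, 1 ≤ n → 0 < f (n : ℝ) := fun n hn =>
    lt_of_lt_of_le f1pos (hmono (by norm_num) (by simp) (by exact_mod_cast hn))
  have htend : Tendsto (lacH k) atTop atTop := hk.2.2
  -- bounds on the individual terms
  have hterm : ∀ ε ∈ Set.Ioc (0:ℝ) 1, ∀ n : ℕ, 1 ≤ n →
      f ((n : ℝ) * ε) / f (n : ℝ) ∈ Set.Icc (0:ℝ) 1 := by
    intro ε hε n hn
    have hn0 : (0:ℝ) ≤ (n:ℝ) := by positivity
    have hnum0 : (0:ℝ) ≤ (n:ℝ) * ε := mul_nonneg hn0 hε.1.le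
    have hle : (n:ℝ) * ε ≤ (n:ℝ) := by
      nlinarith [hε.2, hε.1.le]
    constructor
    · exact div_nonneg (hpos _ hnum0) (fnpos n hn).le
    · exact div_le_one_of_le₀ (hmono hnum0 hn0 hle) (fnpos n hn).le
  have hbdd : ∀ ε ∈ Set.Ioc (0:ℝ) 1,
      ∀ᶠ t in atTop, f ((lacH k t : ℝ) * ε) / f ((lacH k t : ℝ)) ∈ Set.Icc (0:ℝ) 1 := by
    intro ε hε
    filter_upwards [htend.eventually_ge_atTop 1] with t ht
    exact hterm ε hε _ ht
  have key : ∀ ε ∈ Set.Ioc (0:ℝ) 1,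
      0 ≤ modPhiTheta f k ε ∧ modPhiTheta f k ε ≤ modPhi f ε := by
    intro ε hε
    have hbddt := hbdd ε hε
    have hub : IsBoundedUnder (· ≤ ·) atTop
        (fun t : ℕ => f ((lacH k t : ℝ) * ε) / f ((lacH k t : ℝ))) :=
      ⟨1, hbddt.mono fun t ht => ht.2⟩
    constructor
    · exact le_limsup_of_frequently_le
        (hbddt.mono fun t ht => ht.1).frequently hub
    · have hmapeq : modPhiTheta f k ε =
          limsup (fun n : ℕ => f ((n : ℝ) * ε) / f (n : ℝ)) (map (lacH k) atTop) := by
        simp [modPhiTheta, Filter.limsup, Filter.map_map]; rfl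
      rw [hmapeq]
      refine limsup_le_limsup_of_le htend ?_ ?_
      · -- cobounded below on the mapped filter
        refine IsCoboundedUnder.of_frequently_ge (u := fun n : ℕ => f ((n : ℝ) * ε) / f (n : ℝ)) (a := 0) ?_
        rw [frequently_map]
        exact ((htend.eventually_ge_atTop 1).mono
          (fun t ht => (hterm ε hε _ ht).1)).frequently
      · -- bounded above on atTop
        refine ⟨1, ?_⟩
        rw [eventually_map]
        filter_upwards [eventually_ge_atTop 1] with n hn
        exact (hterm ε hε n hn).2
  -- squeeze
  have hmem : ∀ᶠ ε in nhdsWithin (0:ℝ) (Set.Ioi 0), ε ∈ Set.Ioc (0:ℝ) 1 :=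
    Ioc_mem_nhdsGT_of_mem ⟨le_refl 0, one_pos⟩
  refine tendsto_of_tendsto_of_tendsto_of_le_of_le' tendsto_const_nhds hfc ?_ ?_
  · filter_upwards [hmem] with ε hε
    exact (key ε hε).1
  · filter_upwards [hmem] with ε hε
    exact (key ε hε).2
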